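/- arXiv:1012.3249 — 4 statements merged into one kernel-verified Lean document; each statement's English description precedes it below -/
import Mathlib

section
/- Let n, a, t, m be natural numbers with a ≥ 1 and 2an = a(a+1) + 2t + 2m. Let α₁ ≥ α₂ ≥ ... ≥ α_{n-a} ≥ 1 be positive integers with α₁ + ... + α_{n-a} = n and α₂ + 2α₃ + ... + (n-a-1)α_{n-a} = n(n-1)/2 - t. Then α₁ ≥ a - m + 1. -/
/-- Lower bound of Lemma 2.2: `α₁ ≥ a - m + 1`, stated without
natural subtraction as `α₁ + m ≥ a + 1`. -/
theorem stmt3 (n a t m : ℕ) (α : ℕ → ℕ) (ha : 1 ≤ a)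
    (hnam : 2 * a * n = a * (a + 1) + 2 * t + 2 * m)
    (hmono : ∀ i j, 1 ≤ i → i ≤ j → j ≤ n - a → α j ≤ α i)
    (hpos : ∀ i, 1 ≤ i → i ≤ n - a → 1 ≤ α i)
    (hsum : ∑ i ∈ Finset.Icc 1 (n - a), α i = n)
    (hM : (∑ i ∈ Finset.Icc 1 (n - a), (i - 1) * α i) + t = n * (n - 1) / 2) :
    α 1 + m ≥ a + 1 := by
  have ha2 : 2 ≤ a * (a + 1) := by
    calc 2 = 1 * 2 := by ring
    _ ≤ a * (a + 1) := Nat.mul_le_mul ha (by omega)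
  rcases Nat.eq_zero_or_pos (n - a) with hk0 | hk1
  · rw [hk0] at hsum
    simp at hsum
    subst hsum
    simp at hnam
    omega
  obtain ⟨K, hK⟩ : ∃ K, n - a = K + 1 := ⟨n - a - 1, by omega⟩
  have hn : n = K + 1 + a := by omega
  rw [hK] at hsum hM hpos
  have hsplit : Finset.Icc 1 (K + 1) = insert 1 (Finset.Icc 2 (K + 1)) := by
    ext i; simp [Finset.mem_Icc, Finset.mem_insert]; omega
  have h1notin : (1 : ℕ) ∉ Finset.Icc 2 (K + 1) := by simp
  rw [hsplit, Finset.sum_insert h1notin] at hsum hM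
  simp only [Nat.sub_self, zero_mul, zero_add] at hM
  -- per-term inequality on Icc 2 (K+1)
  have hterm : ∀ i ∈ Finset.Icc 2 (K + 1), (i - 1) + α i ≤ (i - 1) * α i + 1 := by
    intro i hi
    simp only [Finset.mem_Icc] at hi
    obtain ⟨x, hx⟩ : ∃ x, i - 1 = x + 1 := ⟨i - 2, by omega⟩
    obtain ⟨y, hy⟩ : ∃ y, α i = y + 1 := ⟨α i - 1, by
      have := hpos i (by omega) (by omega); omega⟩
    rw [hx, hy]; nlinarith
  have hsum_le := Finset.sum_le_sum hterm
  rw [Finset.sum_add_distrib, Finset.sum_add_distrib, Finset.sum_const] at hsum_le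
  have hcard : (Finset.Icc 2 (K + 1)).card = K := by
    rw [Nat.card_Icc]; omega
  rw [hcard, smul_eq_mul, mul_one] at hsum_le
  -- compute ∑ (i-1) over Icc 2 (K+1)
  have hE : (∑ i ∈ Finset.Icc 2 (K + 1), (i - 1)) * 2 = K * (K + 1) := by
    have hre : ∑ i ∈ Finset.Icc 2 (K + 1), (i - 1)
        = ∑ i ∈ Finset.range K, (i + 1) := by
      rw [← Finset.Ico_add_one_right_eq_Icc, Finset.sum_Ico_eq_sum_range,
        show K + 1 + 1 - 2 = K from by omega]
      simp [add_comm]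
    have h := Finset.sum_range_id_mul_two (K + 1)
    rw [Finset.sum_range_succ] at h
    simp only [Nat.add_sub_cancel] at h
    have h2 : ∑ i ∈ Finset.range K, (i + 1)
        = (∑ i ∈ Finset.range K, i) + K := by
      rw [Finset.sum_add_distrib, Finset.sum_const, Finset.card_range,
        smul_eq_mul, mul_one]
    rw [hre, h2]
    nlinarith [h]
  -- evenness of n*(n-1)
  have hdvd : 2 ∣ n * (n - 1) := by
    have hnn : n * (n - 1) = (K + a) * (K + a + 1) := by
      rw [hn]
      have : K + 1 + a - 1 = K + a := by omega
      rw [this]; ring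
    rw [hnn]
    exact (Nat.even_mul_succ_self (K + a)).two_dvd
  have hd2 : n * (n - 1) / 2 * 2 = n * (n - 1) := Nat.div_mul_cancel hdvd
  have hM2 : ((∑ i ∈ Finset.Icc 2 (K + 1), (i - 1) * α i) + t) * 2
      = (K + a) * (K + a + 1) := by
    rw [hM, hd2, hn]
    have : K + 1 + a - 1 = K + a := by omega
    rw [this]; ring
  rw [hn] at hnam hsum
  set E := ∑ i ∈ Finset.Icc 2 (K + 1), (i - 1)
  set A2 := ∑ i ∈ Finset.Icc 2 (K + 1), α i
  set S2 := ∑ i ∈ Finset.Icc 2 (K + 1), (i - 1) * α i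
  clear_value E A2 S2
  clear hM hterm hsplit h1notin hmono hpos hcard hd2 hdvd
  linarith [hsum_le, hE, hM2, hnam, hsum]
end

section
/- Let α₁ ≥ α₂ ≥ ... ≥ α_k ≥ 1 be positive integers with Σαᵢ = n, k ≥ 1, and α₂ + 2α₃ + ... + (k-1)α_k = n(n-1)/2 - 1 (with the convention that the sum is 0 if k = 1). Then k = 1 and n = 2, i.e., the partition is (2). -/
open Finset

/-- Square of a sum identity: `(Σα)² = Σα² + 2·Σᵢ αᵢ·(prefix sum before i)`. -/
lemma sq_sum_aux13 (α : ℕ → ℕ) (k : ℕ) :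
    (∑ i ∈ Icc 1 k, α i) ^ 2 =
      ∑ i ∈ Icc 1 k, (α i) ^ 2 +
        2 * ∑ i ∈ Icc 1 k, α i * ∑ j ∈ Icc 1 (i - 1), α j := by
  induction k with
  | zero => simp
  | succ k ih =>
      rw [Finset.sum_Icc_succ_top (by omega : 1 ≤ k + 1),
          Finset.sum_Icc_succ_top (by omega : 1 ≤ k + 1) (fun i => (α i) ^ 2),
          Finset.sum_Icc_succ_top (by omega : 1 ≤ k + 1)
            (fun i => α i * ∑ j ∈ Icc 1 (i - 1), α j)]
      simp only [Nat.add_sub_cancel]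
      rw [add_sq, ih]
      ring

/-- Abelian case of Theorem 1.1(ii): if
`α₂ + 2α₃ + ... + (k-1)α_k = n(n-1)/2 - 1`, then `k = 1` and `n = 2`,
i.e. the partition is `(2)` and `G ≅ Z_{p²}`. -/
theorem stmt13 (n k : ℕ) (α : ℕ → ℕ) (hk : 1 ≤ k)
    (hmono : ∀ i j, 1 ≤ i → i ≤ j → j ≤ k → α j ≤ α i)
    (hpos : ∀ i, 1 ≤ i → i ≤ k → 1 ≤ α i)
    (hsum : ∑ i ∈ Finset.Icc 1 k, α i = n)
    (hM : (∑ i ∈ Finset.Icc 1 k, (i - 1) * α i) + 1 = n * (n - 1) / 2) :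
    k = 1 ∧ n = 2 := by
  have h1mem : (1 : ℕ) ∈ Icc 1 k := by simp [hk]
  have hn1 : 1 ≤ n := by
    rw [← hsum]
    calc 1 ≤ α 1 := hpos 1 le_rfl hk
      _ ≤ ∑ i ∈ Icc 1 k, α i :=
        Finset.single_le_sum (fun i _ => Nat.zero_le _) h1mem
  -- n*(n-1) is even
  have heven : Even (n * (n - 1)) := by
    have h := Nat.even_mul_succ_self (n - 1)
    have hpred : n - 1 + 1 = n := Nat.succ_pred_eq_of_pos hn1
    rw [hpred] at h
    rwa [Nat.mul_comm]
  have hE : 2 * ((∑ i ∈ Finset.Icc 1 k, (i - 1) * α i) + 1) = n * (n - 1) := by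
    rw [hM]
    exact Nat.mul_div_cancel' heven.two_dvd
  have hmul : n * (n - 1) + n = n ^ 2 := by
    obtain ⟨m, rfl⟩ : ∃ m, n = m + 1 := ⟨n - 1, by omega⟩
    simp only [Nat.add_sub_cancel]
    ring
  -- key equation : 2T + 2 + n = n²
  have hE2 : 2 * (∑ i ∈ Icc 1 k, (i - 1) * α i) + 2 + n = n ^ 2 := by
    rw [← hmul, ← hE]; ring
  have hid := sq_sum_aux13 α k
  rw [hsum] at hid
  -- termwise bound (i-1)·αᵢ ≤ αᵢ·Bᵢ
  have hPB : ∀ i ∈ Icc 1 k, (i - 1) * α i ≤ α i * ∑ j ∈ Icc 1 (i - 1), α j := by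
    intro i hi
    rw [Finset.mem_Icc] at hi
    have hB : i - 1 ≤ ∑ j ∈ Icc 1 (i - 1), α j := by
      calc i - 1 = ∑ j ∈ Icc 1 (i - 1), 1 := by
            simp [Nat.card_Icc]
        _ ≤ ∑ j ∈ Icc 1 (i - 1), α j := by
            refine Finset.sum_le_sum fun j hj => ?_
            rw [Finset.mem_Icc] at hj
            exact hpos j hj.1 (by omega)
    calc (i - 1) * α i = α i * (i - 1) := Nat.mul_comm _ _
      _ ≤ α i * ∑ j ∈ Icc 1 (i - 1), α j := Nat.mul_le_mul_left _ hB
  by_cases hk1 : k = 1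
  · subst hk1
    refine ⟨rfl, ?_⟩
    simp only [Finset.Icc_self, Finset.sum_singleton, Nat.sub_self, Nat.zero_mul] at hE
    -- hE : 2 * (0 + 1) = n * (n-1)
    have h2 : n * (n - 1) = 2 := by omega
    have hle : n ≤ 2 := by
      by_contra hgt
      have h3 : 3 ≤ n := by omega
      have h4 : 2 ≤ n - 1 := by omega
      have : 3 * 2 ≤ n * (n - 1) := Nat.mul_le_mul h3 h4
      omega
    interval_cases n
    · simp at h2
    · rfl
  · exfalso
    have hk2 : 2 ≤ k := by omega
    have h2mem : (2 : ℕ) ∈ Icc 1 k := by simp [hk2]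
    by_cases ha : 2 ≤ α 1
    · -- case α₁ ≥ 2
      have hQ : n + 2 ≤ ∑ i ∈ Icc 1 k, (α i) ^ 2 := by
        rw [← hsum, ← Finset.sum_erase_add _ _ h1mem,
            ← Finset.sum_erase_add _ (fun i => (α i) ^ 2) h1mem]
        have h1 : α 1 + 2 ≤ (α 1) ^ 2 := by nlinarith
        have h2 : ∑ i ∈ (Icc 1 k).erase 1, α i ≤ ∑ i ∈ (Icc 1 k).erase 1, (α i) ^ 2 :=
          Finset.sum_le_sum fun i _ => Nat.le_self_pow two_ne_zero (α i)
        omega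
      have hP : (∑ i ∈ Icc 1 k, (i - 1) * α i) <
          ∑ i ∈ Icc 1 k, α i * ∑ j ∈ Icc 1 (i - 1), α j := by
        refine Finset.sum_lt_sum hPB ⟨2, h2mem, ?_⟩
        have ha2 : 1 ≤ α 2 := hpos 2 (by omega) hk2
        simp only [show (2 : ℕ) - 1 = 1 from rfl, Finset.Icc_self, Finset.sum_singleton,
          Nat.one_mul]
        calc α 2 = α 2 * 1 := (Nat.mul_one _).symm
          _ < α 2 * α 1 := by
            exact (Nat.mul_lt_mul_left (by omega : 0 < α 2)).mpr (by omega)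
      omega
    · -- case α₁ = 1 : all parts equal 1
      have hall : ∀ i ∈ Icc 1 k, α i = 1 := by
        intro i hi
        rw [Finset.mem_Icc] at hi
        have := hmono 1 i le_rfl hi.1 hi.2
        have := hpos i hi.1 hi.2
        omega
      have hTP : (∑ i ∈ Icc 1 k, (i - 1) * α i) =
          ∑ i ∈ Icc 1 k, α i * ∑ j ∈ Icc 1 (i - 1), α j := by
        refine Finset.sum_congr rfl fun i hi => ?_
        rw [Finset.mem_Icc] at hi
        have hBi : ∑ j ∈ Icc 1 (i - 1), α j = i - 1 := by
          calc ∑ j ∈ Icc 1 (i - 1), α j = ∑ j ∈ Icc 1 (i - 1), 1 := by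
                refine Finset.sum_congr rfl fun j hj => ?_
                rw [Finset.mem_Icc] at hj
                exact hall j (by rw [Finset.mem_Icc]; omega)
            _ = i - 1 := by simp [Nat.card_Icc]
        rw [hBi, hall i (by rw [Finset.mem_Icc]; omega)]
        ring
      have hQn : (∑ i ∈ Icc 1 k, (α i) ^ 2) = n := by
        rw [← hsum]
        refine Finset.sum_congr rfl fun i hi => ?_
        rw [hall i hi]; ring
      omega
end

section
/- Let α₁ ≥ α₂ ≥ ... ≥ α_k ≥ 1 be positive integers with Σαᵢ = n and α₂ + 2α₃ + ... + (k-1)α_k = n(n-1)/2 - 3. Then either (k = 1 and n = 3) or (k = 3 and (α₁,α₂,α₃) = (2,1,1)), i.e., the partition is (3) or (2,1,1). -/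
/-- Abelian case of Ellis's theorem (Theorem 1.1(iv)): if
`α₂ + 2α₃ + ... + (k-1)α_k = n(n-1)/2 - 3`, then the partition is
`(3)` or `(2,1,1)`. -/
theorem stmt15 (n k : ℕ) (α : ℕ → ℕ) (hk : 1 ≤ k)
    (hmono : ∀ i j, 1 ≤ i → i ≤ j → j ≤ k → α j ≤ α i)
    (hpos : ∀ i, 1 ≤ i → i ≤ k → 1 ≤ α i)
    (hsum : ∑ i ∈ Finset.Icc 1 k, α i = n)
    (hM : (∑ i ∈ Finset.Icc 1 k, (i - 1) * α i) + 3 = n * (n - 1) / 2) :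
    (k = 1 ∧ n = 3) ∨ (k = 3 ∧ α 1 = 2 ∧ α 2 = 1 ∧ α 3 = 1) := by
  classical
  set β : ℕ → ℕ := fun i => α i - 1 with hβdef
  have hβsum : (∑ i ∈ Finset.Icc 1 k, β i) + k = n := by
    have h1 : ∑ i ∈ Finset.Icc 1 k, (β i + 1) = n := by
      rw [← hsum]
      refine Finset.sum_congr rfl fun i hi => ?_
      have hi' := Finset.mem_Icc.mp hi
      have := hpos i hi'.1 hi'.2
      simp only [hβdef]; omega
    rw [Finset.sum_add_distrib, Finset.sum_const, Nat.card_Icc] at h1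
    simpa using h1
  have hkn : k ≤ n := by omega
  set E := ∑ i ∈ Finset.Icc 1 k, β i with hE
  obtain ⟨e, hne⟩ : ∃ e, n = k + e := ⟨n - k, by omega⟩
  have hEe : E = e := by omega
  -- Gauss
  have hgauss : 2 * (∑ i ∈ Finset.Icc 1 k, (i - 1)) = k * (k - 1) := by
    have h : ∑ i ∈ Finset.Icc 1 k, (i - 1) = ∑ i ∈ Finset.range k, i := by
      rw [show Finset.Icc 1 k = Finset.Ico 1 (k + 1) from (Finset.Ico_add_one_right_eq_Icc 1 k).symm]
      rw [Finset.sum_Ico_eq_sum_range]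
      simp
    rw [h, mul_comm, Finset.sum_range_id_mul_two k]
  set T := ∑ i ∈ Finset.Icc 1 k, (i - 1) * β i with hT
  have hsplit : (∑ i ∈ Finset.Icc 1 k, (i - 1) * α i)
      = T + (∑ i ∈ Finset.Icc 1 k, (i - 1)) := by
    rw [hT, ← Finset.sum_add_distrib]
    refine Finset.sum_congr rfl fun i hi => ?_
    have hi' := Finset.mem_Icc.mp hi
    have hp := hpos i hi'.1 hi'.2
    have hαi : α i = β i + 1 := by simp only [hβdef]; omega
    rw [hαi]; ring
  -- multiply hM by 2
  have hdvd : 2 ∣ n * (n - 1) := by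
    rcases Nat.even_or_odd n with hn | hn
    · exact Dvd.dvd.mul_right hn.two_dvd _
    · rcases hn with ⟨m, hm⟩
      exact Dvd.dvd.mul_left ⟨m, by omega⟩ n
  have h2 : 2 * T + k * (k - 1) + 6 = n * (n - 1) := by
    have := congrArg (fun x => 2 * x) hM
    simp only [Nat.mul_div_cancel' hdvd] at this
    rw [hsplit] at this
    rw [← this]; ring_nf
    omega
  have hnn : n * (n - 1) = k * (k - 1) + 2 * e * k + e * (e - 1) := by
    obtain ⟨K, rfl⟩ : ∃ K, k = K + 1 := ⟨k - 1, by omega⟩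
    rcases Nat.eq_zero_or_pos e with rfl | hepos
    · subst hne
      simp only [Nat.add_zero, Nat.mul_zero, Nat.zero_mul, Nat.add_sub_cancel]
    · obtain ⟨F, rfl⟩ : ∃ F, e = F + 1 := ⟨e - 1, by omega⟩
      subst hne
      have e1 : K + 1 + (F + 1) - 1 = K + F + 1 := by omega
      have e2 : K + 1 - 1 = K := by omega
      have e3 : F + 1 - 1 = F := by omega
      rw [e1, e2, e3]
      ring
  have hmain : 2 * T + 6 = 2 * e * k + e * (e - 1) := by
    rw [hnn] at h2; omega
  -- bound T
  have hTle : T ≤ (k - 1) * E := by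
    rw [hE, Finset.mul_sum, hT]
    refine Finset.sum_le_sum fun i hi => ?_
    have hi' := Finset.mem_Icc.mp hi
    exact Nat.mul_le_mul_right _ (by omega)
  have he2 : e ≤ 2 := by
    by_contra hcon
    push_neg at hcon
    have h6 : 6 ≤ e * (e - 1) := by
      calc 6 = 3 * 2 := rfl
      _ ≤ e * (e - 1) := Nat.mul_le_mul (by omega) (by omega)
    have hkk : 2 * ((k - 1) * e) + 2 * e = 2 * e * k := by
      obtain ⟨K, rfl⟩ : ∃ K, k = K + 1 := ⟨k - 1, by omega⟩
      simp; ring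
    have hTe : T ≤ (k - 1) * e := hEe ▸ hTle
    omega
  -- antitone β
  have hβmono : ∀ i j, 1 ≤ i → i ≤ j → j ≤ k → β j ≤ β i := by
    intro i j h1 h2 h3
    exact Nat.sub_le_sub_right (hmono i j h1 h2 h3) 1
  -- pair sums
  have hpair : 2 ≤ k → β 1 + β 2 ≤ E := by
    intro hk2
    rw [hE]
    have hsub : ({1, 2} : Finset ℕ) ⊆ Finset.Icc 1 k := by
      intro x hx
      simp only [Finset.mem_insert, Finset.mem_singleton] at hx
      rcases hx with rfl | rfl <;> simp [Finset.mem_Icc] <;> omega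
    calc β 1 + β 2 = ∑ i ∈ ({1, 2} : Finset ℕ), β i := by
          rw [Finset.sum_pair (by norm_num)]
      _ ≤ ∑ i ∈ Finset.Icc 1 k, β i := Finset.sum_le_sum_of_subset hsub
  have htriple : 3 ≤ k → β 1 + β 2 + β 3 ≤ E := by
    intro hk3
    rw [hE]
    have hsub : ({1, 2, 3} : Finset ℕ) ⊆ Finset.Icc 1 k := by
      intro x hx
      simp only [Finset.mem_insert, Finset.mem_singleton] at hx
      rcases hx with rfl | rfl | rfl <;> simp [Finset.mem_Icc] <;> omega
    calc β 1 + β 2 + β 3 = ∑ i ∈ ({1, 2, 3} : Finset ℕ), β i := by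
          rw [show ({1,2,3} : Finset ℕ) = insert 1 {2,3} from rfl,
            Finset.sum_insert (by norm_num), Finset.sum_pair (by norm_num)]
          ring
      _ ≤ ∑ i ∈ Finset.Icc 1 k, β i := Finset.sum_le_sum_of_subset hsub
  -- if β 2 = 0 then T = 0
  have hT0 : β 2 = 0 → T = 0 := by
    intro hb2
    rw [hT]
    refine Finset.sum_eq_zero fun i hi => ?_
    have hi' := Finset.mem_Icc.mp hi
    rcases Nat.lt_or_ge i 2 with h | h
    · have : i = 1 := by omega
      subst this; simp
    · have : β i = 0 := Nat.le_zero.mp (hb2 ▸ hβmono 2 i (by omega) h hi'.2)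
      simp [this]
  have hecase : e = 0 ∨ e = 1 ∨ e = 2 := by omega
  rcases hecase with rfl | rfl | rfl
  · -- e = 0 : contradiction
    simp at hmain
  · -- e = 1 : partition (2,1,1)
    have hk3 : k = T + 3 := by omega
    have hb2 : β 2 = 0 := by
      by_contra hb
      have hb2' : 1 ≤ β 2 := by omega
      have hb1 : 1 ≤ β 1 := le_trans hb2' (hβmono 1 2 le_rfl (by omega) (by omega))
      have := hpair (by omega)
      omega
    have hTz : T = 0 := hT0 hb2
    have hkk : k = 3 := by omega
    subst hkk
    right
    have hb3 : β 3 = 0 := Nat.le_zero.mp (hb2 ▸ hβmono 2 3 (by omega) (by omega) le_rfl)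
    have hEeq : β 1 + β 2 + β 3 = E := by
      rw [hE]
      rw [show Finset.Icc 1 3 = ({1, 2, 3} : Finset ℕ) from rfl]
      rw [show ({1,2,3} : Finset ℕ) = insert 1 {2,3} from rfl,
        Finset.sum_insert (by norm_num), Finset.sum_pair (by norm_num)]
      ring
    have hb1 : β 1 = 1 := by omega
    have h1 := hpos 1 (by omega) (by omega)
    have h2' := hpos 2 (by omega) (by omega)
    have h3' := hpos 3 (by omega) (by omega)
    simp only [hβdef] at hb1 hb2 hb3
    refine ⟨rfl, by omega, by omega, by omega⟩
  · -- e = 2 : must be k = 1, n = 3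
    rcases eq_or_lt_of_le hk with hk1 | hk2
    · left
      exact ⟨hk1.symm, by omega⟩
    · exfalso
      rcases Nat.eq_zero_or_pos (β 2) with hb2 | hb2
      · have hTz : T = 0 := hT0 hb2
        omega
      · have hb1 : 1 ≤ β 1 := le_trans hb2 (hβmono 1 2 le_rfl (by omega) (by omega))
        have hp := hpair (by omega)
        have hb2e : β 2 = 1 := by omega
        -- β i = 0 for i ≥ 3
        have hb30 : ∀ i, 3 ≤ i → i ≤ k → β i = 0 := by
          intro i h3 hik
          have h3k : 3 ≤ k := le_trans h3 hik
          have ht := htriple h3k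
          have hb3 : β 3 = 0 := by omega
          exact Nat.le_zero.mp (hb3 ▸ hβmono 3 i (by omega) h3 hik)
        have hTeq : T = 1 := by
          rw [hT]
          rw [Finset.sum_eq_single_of_mem 2 (by simp [Finset.mem_Icc]; omega)]
          · simp [hb2e]
          · intro i hi hne2
            have hi' := Finset.mem_Icc.mp hi
            rcases Nat.lt_or_ge i 2 with h | h
            · have : i = 1 := by omega
              subst this; simp
            · have h3 : 3 ≤ i := by omega
              simp [hb30 i h3 hi'.2]
        omega
end

section
/- Let n, a, t, k, s be integers with a ≥ 1, s ≥ 3, and 2an = a(a+1) + 2t + 2(k+s). Let α₁ ≥ ... ≥ α_{n-a} ≥ 1 with Σαᵢ = n, α₂ + 2α₃ + ... + (n-a-1)α_{n-a} = n(n-1)/2 - t, α₁ = a - k + 1, and α₂ + α₃ = k (i.e., r = 0). Then the multiset {α₂, α₃, α₄, ...} of remaining parts is either {k-s+4, s-4, 2, 2, 1, 1, ...} or {k-s+3, s-3, 3, 1, 1, ...}. -/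
lemma sum_peel {M : Type*} [AddCommMonoid M] (f : ℕ → M) {a b : ℕ} (c : ℕ) (h : a ≤ b)
    (hc : c = a + 1) :
    ∑ i ∈ Finset.Icc a b, f i = f a + ∑ i ∈ Finset.Icc c b, f i := by
  subst hc
  rw [Finset.Icc_add_one_left_eq_Ioc, ← Finset.Ioc_insert_left h, Finset.sum_insert (by simp)]

lemma val_peel {a b : ℕ} (c : ℕ) (h : a ≤ b) (hc : c = a + 1) :
    (Finset.Icc a b).val = a ::ₘ (Finset.Icc c b).val := by
  subst hc
  rw [Finset.Icc_add_one_left_eq_Ioc, ← Finset.Ioc_insert_left h,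
    Finset.insert_val_of_notMem (by simp)]

lemma gauss (m : ℕ) : 2 * ∑ i ∈ Finset.Icc 1 m, ((i:ℤ) - 1) = m * (m - 1) := by
  induction m with
  | zero => simp
  | succ p ih =>
    rw [Finset.sum_Icc_succ_top (by omega)]
    push_cast
    push_cast at ih
    linarith

lemma all_one {s : Finset ℕ} {f : ℕ → ℕ} (h1 : ∀ i ∈ s, 1 ≤ f i)
    (hsum : ∑ i ∈ s, f i = s.card) : ∀ i ∈ s, f i = 1 := by
  by_contra h
  push_neg at h
  obtain ⟨i, hi, hne⟩ := h
  have hlt : ∑ _j ∈ s, (1:ℕ) < ∑ j ∈ s, f j :=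
    Finset.sum_lt_sum h1 ⟨i, hi, lt_of_le_of_ne (h1 i hi) (Ne.symm hne)⟩
  simp only [Finset.sum_const, smul_eq_mul, mul_one] at hlt
  omega

lemma sum_cast_one {s : Finset ℕ} {f : ℕ → ℕ} (h : ∀ i ∈ s, f i = 1) :
    ∑ i ∈ s, (f i : ℤ) = (s.card : ℤ) := by
  rw [Finset.sum_congr rfl (fun i hi => by rw [h i hi])]
  simp

set_option maxHeartbeats 1000000 in
/-- Corollary 2.5(iii), combinatorially: with `r = 0` (i.e. `α₂ + α₃ = k`)
and `s ≥ 3`, the multiset of parts after the first is either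
`{k-s+4, s-4, 2, 2, 1, ..., 1}` or `{k-s+3, s-3, 3, 1, ..., 1}`. -/
theorem stmt17 (n a t : ℕ) (k s : ℤ) (α : ℕ → ℕ) (ha : 1 ≤ a) (hs : 3 ≤ s)
    (hnam : (2 * a * n : ℤ) = a * (a + 1) + 2 * t + 2 * (k + s))
    (hmono : ∀ i j, 1 ≤ i → i ≤ j → j ≤ n - a → α j ≤ α i)
    (hpos : ∀ i, 1 ≤ i → i ≤ n - a → 1 ≤ α i)
    (hsum : ∑ i ∈ Finset.Icc 1 (n - a), α i = n)
    (hM : (∑ i ∈ Finset.Icc 1 (n - a), (i - 1) * α i) + t = n * (n - 1) / 2)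
    (hexp : (α 1 : ℤ) = a - k + 1)
    (hexpM : (α 2 : ℤ) + α 3 = k) :
    (∃ b c : ℕ, (b : ℤ) = k - s + 4 ∧ (c : ℤ) = s - 4 ∧
      (Finset.Icc 2 (n - a)).val.map α
        = b ::ₘ c ::ₘ 2 ::ₘ 2 ::ₘ Multiset.replicate (n - a - 5) 1) ∨
    (∃ b c : ℕ, (b : ℤ) = k - s + 3 ∧ (c : ℤ) = s - 3 ∧
      (Finset.Icc 2 (n - a)).val.map α
        = b ::ₘ c ::ₘ 3 ::ₘ Multiset.replicate (n - a - 4) 1) := by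
  set m := n - a with hmdef
  have hk0 : (0:ℤ) ≤ k := by rw [← hexpM]; positivity
  have ht0 : (0:ℤ) ≤ t := Int.ofNat_nonneg t
  have ha1 : (1:ℤ) ≤ a := by exact_mod_cast ha
  -- dispose of m = 0
  rcases Nat.eq_zero_or_pos m with hm0 | hm1
  · rw [hm0] at hsum
    simp only [Finset.Icc_eq_empty_of_lt (by norm_num : (0:ℕ) < 1),
      Finset.sum_empty] at hsum
    rw [← hsum] at hnam
    push_cast at hnam
    nlinarith [hs, hk0, ht0, ha1]
  have hmn : a + 1 ≤ n := by omega
  have hmZ : (m:ℤ) = (n:ℤ) - a := by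
    have h : m + a = n := by omega
    have := congrArg (Nat.cast : ℕ → ℤ) h
    push_cast at this
    linarith
  have hsumZ : ∑ i ∈ Finset.Icc 1 m, (α i : ℤ) = n := by exact_mod_cast hsum
  -- the key second-moment identity over ℤ
  have h2 : 2 ∣ n * (n - 1) := by
    rcases Nat.even_or_odd n with h | h
    · exact Dvd.dvd.mul_right h.two_dvd _
    · exact Dvd.dvd.mul_left (Nat.Odd.sub_odd h odd_one).two_dvd _
  have hMn : 2 * (∑ i ∈ Finset.Icc 1 m, (i - 1) * α i) + 2 * t = n * (n - 1) := by
    set S := ∑ i ∈ Finset.Icc 1 m, (i - 1) * α i with hS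
    set N := n * (n - 1) with hN
    omega
  have hcast : ((∑ i ∈ Finset.Icc 1 m, (i - 1) * α i : ℕ) : ℤ)
      = ∑ i ∈ Finset.Icc 1 m, ((i:ℤ) - 1) * α i := by
    push_cast
    refine Finset.sum_congr rfl ?_
    intro i hi
    have h1 : 1 ≤ i := (Finset.mem_Icc.mp hi).1
    rw [Nat.cast_sub h1]
    push_cast
    ring
  have hTZ : 2 * (∑ i ∈ Finset.Icc 2 m, ((i:ℤ) - 1) * α i) + 2 * t
      = (n:ℤ) * ((n:ℤ) - 1) := by
    have hn1 : (1:ℕ) ≤ n := by omega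
    have hc2 : ((n * (n - 1) : ℕ) : ℤ) = (n:ℤ) * ((n:ℤ) - 1) := by
      push_cast [Nat.cast_sub hn1]
      ring
    have h' : 2 * ((∑ i ∈ Finset.Icc 1 m, (i - 1) * α i : ℕ) : ℤ) + 2 * (t:ℤ)
        = ((n * (n - 1) : ℕ) : ℤ) := by exact_mod_cast hMn
    rw [hcast, hc2, sum_peel (fun i => ((i:ℤ) - 1) * α i) 2 hm1 rfl] at h'
    norm_num at h'
    linarith [h']
  -- sum of parts 2..m
  have hsum2 : ∑ i ∈ Finset.Icc 2 m, (α i : ℤ) = (m:ℤ) + k - 1 := by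
    rw [sum_peel (fun i => (α i : ℤ)) 2 hm1 rfl] at hsumZ
    rw [hexp] at hsumZ
    linarith [hmZ]
  -- m = 1 impossible
  by_cases hm1' : m = 1
  · exfalso
    rw [hm1'] at hsum2 hTZ
    rw [show Finset.Icc 2 1 = (∅ : Finset ℕ) from Finset.Icc_eq_empty (by omega),
      Finset.sum_empty] at hsum2 hTZ
    have hk : k = 0 := by push_cast at hsum2; linarith
    have hn1 : (n:ℤ) = (a:ℤ) + 1 := by
      have : n = a + 1 := by omega
      exact_mod_cast this
    rw [hn1] at hnam hTZ
    rw [hk] at hnam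
    have h0 : (2:ℤ) * s = 0 := by linear_combination (-1 : ℤ) * hnam - hTZ
    linarith
  -- m = 2 impossible
  by_cases hm2' : m = 2
  · exfalso
    have h2m : 2 ≤ m := by omega
    rw [sum_peel (fun i => (α i : ℤ)) 3 h2m rfl] at hsum2
    rw [hm2'] at hsum2
    rw [show Finset.Icc 3 2 = (∅ : Finset ℕ) from Finset.Icc_eq_empty (by omega),
      Finset.sum_empty] at hsum2
    have hα3 : (0:ℤ) ≤ α 3 := by positivity
    push_cast at hsum2
    linarith [hexpM]
  -- m = 3 impossible
  by_cases hm3' : m = 3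
  · exfalso
    have h2m : 2 ≤ m := by omega
    have h3m : 3 ≤ m := by omega
    rw [sum_peel (fun i => (α i : ℤ)) 3 h2m rfl,
      sum_peel (fun i => (α i : ℤ)) 4 h3m rfl] at hsum2
    rw [hm3'] at hsum2
    rw [show Finset.Icc 4 3 = (∅ : Finset ℕ) from Finset.Icc_eq_empty (by omega),
      Finset.sum_empty] at hsum2
    push_cast at hsum2
    linarith [hexpM]
  have hm4 : 4 ≤ m := by omega
  have h2m : 2 ≤ m := by omega
  have h3m : 3 ≤ m := by omega
  -- sum of parts 4..m is m-1
  have hsum3 : ∑ i ∈ Finset.Icc 4 m, (α i : ℤ) = (m:ℤ) - 1 := by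
    rw [sum_peel (fun i => (α i : ℤ)) 3 h2m rfl,
      sum_peel (fun i => (α i : ℤ)) 4 h3m rfl] at hsum2
    linarith [hexpM]
  have hsum4 : ∑ i ∈ Finset.Icc 5 m, (α i : ℤ) = (m:ℤ) - 1 - α 4 := by
    rw [sum_peel (fun i => (α i : ℤ)) 5 hm4 rfl] at hsum3
    linarith
  -- bound α 4
  have hge : ((m:ℤ) - 4) ≤ ∑ i ∈ Finset.Icc 5 m, (α i : ℤ) := by
    have hb : ∀ i ∈ Finset.Icc 5 m, (1:ℤ) ≤ (α i : ℤ) := by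
      intro i hi
      have hi' := Finset.mem_Icc.mp hi
      exact_mod_cast hpos i (by omega) hi'.2
    have h' := Finset.card_nsmul_le_sum (Finset.Icc 5 m) (fun i => (α i : ℤ)) 1 hb
    rw [Nat.card_Icc] at h'
    simp only [nsmul_eq_mul, mul_one] at h'
    have hc : ((m + 1 - 5 : ℕ) : ℤ) = (m:ℤ) - 4 := by omega
    linarith [hc ▸ h']
  have hα4pos : 1 ≤ α 4 := hpos 4 (by omega) (by omega)
  have hα4le : α 4 ≤ 3 := by omega
  have hcases : α 4 = 1 ∨ α 4 = 2 ∨ α 4 = 3 := by omega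
  rcases hcases with h4 | h4 | h4
  · -- α 4 = 1 : contradiction
    exfalso
    have hone : ∀ i ∈ Finset.Icc 4 m, α i = 1 := by
      intro i hi
      have hi' := Finset.mem_Icc.mp hi
      have := hmono 4 i (by omega) hi'.1 hi'.2
      have := hpos i (by omega) hi'.2
      omega
    have he := sum_cast_one hone
    rw [Nat.card_Icc] at he
    omega
  · -- α 4 = 2 : the {2,2} case
    by_cases hm5' : m = 4
    · exfalso
      rw [hm5'] at hsum4
      rw [show Finset.Icc 5 4 = (∅ : Finset ℕ) from Finset.Icc_eq_empty (by omega),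
        Finset.sum_empty] at hsum4
      rw [h4] at hsum4
      norm_num at hsum4
    have h5m : 5 ≤ m := by omega
    have hα5le : α 5 ≤ 2 := by
      have := hmono 4 5 (by omega) (by omega) (by omega)
      omega
    have hα5pos : 1 ≤ α 5 := hpos 5 (by omega) (by omega)
    have hα5 : α 5 = 2 := by
      rcases (by omega : α 5 = 1 ∨ α 5 = 2) with h5 | h5
      · exfalso
        have hone : ∀ i ∈ Finset.Icc 5 m, α i = 1 := by
          intro i hi
          have hi' := Finset.mem_Icc.mp hi
          have := hmono 5 i (by omega) hi'.1 hi'.2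
          have := hpos i (by omega) hi'.2
          omega
        have he := sum_cast_one hone
        rw [Nat.card_Icc] at he
        rw [h4] at hsum4
        omega
      · exact h5
    have hsum5 : ∑ i ∈ Finset.Icc 6 m, (α i : ℤ) = (m:ℤ) - 5 := by
      rw [sum_peel (fun i => (α i : ℤ)) 6 h5m rfl] at hsum4
      rw [h4] at hsum4
      rw [hα5] at hsum4
      push_cast at hsum4
      linarith
    have hsum5n : ∑ i ∈ Finset.Icc 6 m, α i = (Finset.Icc 6 m).card := by
      have h' : ((∑ i ∈ Finset.Icc 6 m, α i : ℕ) : ℤ) = (m:ℤ) - 5 := by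
        rw [Nat.cast_sum]
        exact hsum5
      rw [Nat.card_Icc]
      omega
    have hone : ∀ i ∈ Finset.Icc 6 m, α i = 1 := by
      refine all_one ?_ hsum5n
      intro i hi
      have hi' := Finset.mem_Icc.mp hi
      exact hpos i (by omega) hi'.2
    -- Gauss part
    have hG : 2 * ∑ i ∈ Finset.Icc 6 m, ((i:ℤ) - 1) = (m:ℤ) * ((m:ℤ) - 1) - 20 := by
      have hg := gauss m
      rw [sum_peel (fun i => ((i:ℤ) - 1)) 2 hm1 rfl,
        sum_peel (fun i => ((i:ℤ) - 1)) 3 h2m rfl,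
        sum_peel (fun i => ((i:ℤ) - 1)) 4 h3m rfl,
        sum_peel (fun i => ((i:ℤ) - 1)) 5 hm4 rfl,
        sum_peel (fun i => ((i:ℤ) - 1)) 6 h5m rfl] at hg
      push_cast at hg
      linarith
    have hS6 : ∑ i ∈ Finset.Icc 6 m, ((i:ℤ) - 1) * α i
        = ∑ i ∈ Finset.Icc 6 m, ((i:ℤ) - 1) :=
      Finset.sum_congr rfl (fun i hi => by rw [hone i hi]; norm_num)
    rw [sum_peel (fun i => ((i:ℤ) - 1) * α i) 3 h2m rfl,
      sum_peel (fun i => ((i:ℤ) - 1) * α i) 4 h3m rfl,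
      sum_peel (fun i => ((i:ℤ) - 1) * α i) 5 hm4 rfl,
      sum_peel (fun i => ((i:ℤ) - 1) * α i) 6 h5m rfl, hS6] at hTZ
    have h4Z : ((α 4 : ℕ) : ℤ) = 2 := by exact_mod_cast h4
    have h5Z : ((α 5 : ℕ) : ℤ) = 2 := by exact_mod_cast hα5
    norm_num at hTZ hG
    have hE : 2 * (α 2 : ℤ) + 4 * (α 3 : ℤ) + 8 + (m:ℤ) * ((m:ℤ) - 1) + 2 * (t:ℤ)
        = (n:ℤ) * ((n:ℤ) - 1) := by linarith [hTZ, hG, h4Z, h5Z]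
    have hkey : 2 * (α 2 : ℤ) + 4 * (α 3 : ℤ) = 2 * k + 2 * s - 8 := by
      linear_combination hE + hnam - ((m:ℤ) + (n:ℤ) - (a:ℤ) - 1) * hmZ
    have hc3 : ((α 3 : ℕ) : ℤ) = s - 4 := by linarith [hexpM]
    have hb2 : ((α 2 : ℕ) : ℤ) = k - s + 4 := by linarith [hexpM]
    refine Or.inl ⟨α 2, α 3, hb2, hc3, ?_⟩
    have hvals : (Finset.Icc 2 m).val
        = 2 ::ₘ 3 ::ₘ 4 ::ₘ 5 ::ₘ (Finset.Icc 6 m).val := by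
      rw [val_peel 3 h2m rfl, val_peel 4 h3m rfl, val_peel 5 hm4 rfl,
        val_peel 6 h5m rfl]
    rw [hvals]
    simp only [Multiset.map_cons]
    rw [h4, hα5]
    congr 1
    congr 1
    congr 1
    congr 1
    rw [Multiset.eq_replicate]
    constructor
    · rw [Multiset.card_map]
      have : (Finset.Icc 6 m).card = m - 5 := by rw [Nat.card_Icc]; omega
      exact this
    · intro b hb
      obtain ⟨i, hi, rfl⟩ := Multiset.mem_map.mp hb
      exact hone i hi
  · -- α 4 = 3 : the {3} case
    have hsum4' : ∑ i ∈ Finset.Icc 5 m, (α i : ℤ) = (m:ℤ) - 4 := by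
      rw [h4] at hsum4
      push_cast at hsum4
      linarith
    have hsum4n : ∑ i ∈ Finset.Icc 5 m, α i = (Finset.Icc 5 m).card := by
      have h' : ((∑ i ∈ Finset.Icc 5 m, α i : ℕ) : ℤ) = (m:ℤ) - 4 := by
        rw [Nat.cast_sum]
        exact hsum4'
      rw [Nat.card_Icc]
      omega
    have hone : ∀ i ∈ Finset.Icc 5 m, α i = 1 := by
      refine all_one ?_ hsum4n
      intro i hi
      have hi' := Finset.mem_Icc.mp hi
      exact hpos i (by omega) hi'.2
    have hG : 2 * ∑ i ∈ Finset.Icc 5 m, ((i:ℤ) - 1) = (m:ℤ) * ((m:ℤ) - 1) - 12 := by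
      have hg := gauss m
      rw [sum_peel (fun i => ((i:ℤ) - 1)) 2 hm1 rfl,
        sum_peel (fun i => ((i:ℤ) - 1)) 3 h2m rfl,
        sum_peel (fun i => ((i:ℤ) - 1)) 4 h3m rfl,
        sum_peel (fun i => ((i:ℤ) - 1)) 5 hm4 rfl] at hg
      push_cast at hg
      linarith
    have hS5 : ∑ i ∈ Finset.Icc 5 m, ((i:ℤ) - 1) * α i
        = ∑ i ∈ Finset.Icc 5 m, ((i:ℤ) - 1) :=
      Finset.sum_congr rfl (fun i hi => by rw [hone i hi]; norm_num)
    rw [sum_peel (fun i => ((i:ℤ) - 1) * α i) 3 h2m rfl,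
      sum_peel (fun i => ((i:ℤ) - 1) * α i) 4 h3m rfl,
      sum_peel (fun i => ((i:ℤ) - 1) * α i) 5 hm4 rfl, hS5] at hTZ
    have h4Z : ((α 4 : ℕ) : ℤ) = 3 := by exact_mod_cast h4
    norm_num at hTZ hG
    have hE : 2 * (α 2 : ℤ) + 4 * (α 3 : ℤ) + 6 + (m:ℤ) * ((m:ℤ) - 1) + 2 * (t:ℤ)
        = (n:ℤ) * ((n:ℤ) - 1) := by linarith [hTZ, hG, h4Z]
    have hkey : 2 * (α 2 : ℤ) + 4 * (α 3 : ℤ) = 2 * k + 2 * s - 6 := by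
      linear_combination hE + hnam - ((m:ℤ) + (n:ℤ) - (a:ℤ) - 1) * hmZ
    have hc3 : ((α 3 : ℕ) : ℤ) = s - 3 := by linarith [hexpM]
    have hb2 : ((α 2 : ℕ) : ℤ) = k - s + 3 := by linarith [hexpM]
    refine Or.inr ⟨α 2, α 3, hb2, hc3, ?_⟩
    have hvals : (Finset.Icc 2 m).val
        = 2 ::ₘ 3 ::ₘ 4 ::ₘ (Finset.Icc 5 m).val := by
      rw [val_peel 3 h2m rfl, val_peel 4 h3m rfl, val_peel 5 hm4 rfl]
    rw [hvals]
    simp only [Multiset.map_cons]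
    rw [h4]
    congr 1
    congr 1
    congr 1
    rw [Multiset.eq_replicate]
    constructor
    · rw [Multiset.card_map]
      have : (Finset.Icc 5 m).card = m - 4 := by rw [Nat.card_Icc]; omega
      exact this
    · intro b hb
      obtain ⟨i, hi, rfl⟩ := Multiset.mem_map.mp hb
      exact hone i hi
end
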